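/- Let r and n be positive integers, let O and P be two positive-dominant total orders on C(r,n), and let n̄ = (n_0, n_1, …, n_k) be a composition of n. Then there exists a bijection Ψ from N_0^{r,n}(n̄) onto itself such that for every f ∈ N_0^{r,n}(n̄), inv_P(f) = inv_O(Ψ(f)) and col(f) = col(Ψ(f)). -/

import Mathlib

open scoped Classical

abbrev CI : Type := ℕ × ℕ

/-- Membership in the set `C(r,n)` of colored integers. -/
def memC (r n : ℕ) (x : CI) : Prop :=
  x.1 ≤ n ∧ x.2 < r ∧ (x.1 = 0 → x.2 = 0)

/-- A positive-dominant (strict) total order on the colored integers `C(r,n)`. -/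
structure PDOrder (r n : ℕ) where
  lt : CI → CI → Prop
  irrefl : ∀ x, memC r n x → ¬lt x x
  trans : ∀ x y z, memC r n x → memC r n y → memC r n z → lt x y → lt y z → lt x z
  trichotomy : ∀ x y, memC r n x → memC r n y → x = y ∨ lt x y ∨ lt y x
  nat_mono : ∀ i j : ℕ, i ≤ n → j ≤ n → i < j → lt (i, 0) (j, 0)
  pos_dom : ∀ i j c : ℕ, i ≤ n → 1 ≤ j → j ≤ n → 1 ≤ c → c < r → lt (j, c) (i, 0)

/-- A colored permutation in `G(r,n) = Z_r ≀ S_n`. -/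
structure ColoredPerm (r n : ℕ) where
  perm : Equiv.Perm (Fin n)
  color : Fin n → Fin r

/-- The colored entry `π(i)^{c_i}` (values are taken in `[1,n]`). -/
def cval {r n : ℕ} (γ : ColoredPerm r n) (i : Fin n) : CI :=
  ((γ.perm i : ℕ) + 1, (γ.color i : ℕ))

/-- Entry `γ(j)` for `j ∈ {0,…,n}`, with the convention `γ(0) = 0`. -/
def centry {r n : ℕ} (γ : ColoredPerm r n) (j : ℕ) : CI :=
  if h : 1 ≤ j ∧ j ≤ n then cval γ ⟨j - 1, by omega⟩ else (0, 0)

/-- Descent set `Des(γ) ⊆ {0,…,n-1}` with respect to the relation `lt`. -/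
noncomputable def DesSet {r n : ℕ} (lt : CI → CI → Prop) (γ : ColoredPerm r n) : Finset ℕ :=
  (Finset.range n).filter fun j => lt (centry γ (j + 1)) (centry γ j)

noncomputable def desStat {r n : ℕ} (lt : CI → CI → Prop) (γ : ColoredPerm r n) : ℕ :=
  (DesSet lt γ).card

noncomputable def majStat {r n : ℕ} (lt : CI → CI → Prop) (γ : ColoredPerm r n) : ℕ :=
  ∑ j ∈ DesSet lt γ, j

noncomputable def invStat {r n : ℕ} (lt : CI → CI → Prop) (γ : ColoredPerm r n) : ℕ :=
  ((Finset.univ : Finset (Fin n × Fin n)).filter fun p =>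
    p.1 < p.2 ∧ lt (cval γ p.2) (cval γ p.1)).card

noncomputable def lenStat {r n : ℕ} (lt : CI → CI → Prop) (γ : ColoredPerm r n) : ℕ :=
  invStat lt γ +
    ∑ i ∈ Finset.univ.filter (fun i => 0 < (γ.color i : ℕ)),
      ((γ.perm i : ℕ) + 1 + (γ.color i : ℕ) - 1)

def colStat {r n : ℕ} (γ : ColoredPerm r n) : ℕ := ∑ i, (γ.color i : ℕ)

/-- The inverse colored permutation `γ⁻¹`. -/
def cinv {r n : ℕ} (γ : ColoredPerm r n) : ColoredPerm r n :=
  ⟨γ.perm⁻¹, fun i => γ.color (γ.perm⁻¹ i)⟩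

/-- An element of `N_0^{r,n}`: a sequence of colored nonnegative integers. -/
structure ColoredSeq (r n : ℕ) where
  val : Fin n → ℕ
  col : Fin n → ℕ
  col_lt : ∀ i, col i < r
  zero_col : ∀ i, val i = 0 → col i = 0

/-- `γ` is the colored permutation `γ_O(f)` obtained by sorting the colored positions
`i^{cf_i}` by increasing value `f_i`, ties broken by increasing `lt`-order. -/
def isSorted {r n : ℕ} (lt : CI → CI → Prop) (f : ColoredSeq r n) (γ : ColoredPerm r n) : Prop :=
  (∀ i, (γ.color i : ℕ) = f.col (γ.perm i)) ∧
    ∀ i j : Fin n, i < j →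
      f.val (γ.perm i) < f.val (γ.perm j) ∨
        (f.val (γ.perm i) = f.val (γ.perm j) ∧ lt (cval γ i) (cval γ j))

def maxf {r n : ℕ} (f : ColoredSeq r n) : ℕ := Finset.univ.sup f.val
def sumf {r n : ℕ} (f : ColoredSeq r n) : ℕ := ∑ i, f.val i
def colf {r n : ℕ} (f : ColoredSeq r n) : ℕ := ∑ i, f.col i

def NSet (r n k : ℕ) (nv : ℕ → ℕ) : Set (ColoredSeq r n) :=
  {f | ∀ j ≤ k, (Finset.univ.filter fun i => f.val i = j).card = nv j}


namespace Stmt5Aux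

variable {r n : ℕ}

/-- The colored symbol attached to position `p` with color function `c`. -/
def sym (c : Fin n → ℕ) (p : Fin n) : CI := ((p : ℕ) + 1, c p)

lemma mem_sym {c : Fin n → ℕ} (hc : ∀ i, c i < r) (p : Fin n) : memC r n (sym c p) :=
  ⟨p.isLt, hc p, by simp [sym]⟩

lemma asymm_lt (O : PDOrder r n) {x y : CI} (hx : memC r n x) (hy : memC r n y)
    (h : O.lt x y) : ¬ O.lt y x :=
  fun h' => O.irrefl x hx (O.trans x y x hx hy hx h h')

lemma lt_nat_iff (O : PDOrder r n) (hr : 0 < r) (x y : Fin n) :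
    O.lt ((y : ℕ) + 1, 0) ((x : ℕ) + 1, 0) ↔ (y : ℕ) < (x : ℕ) := by
  have hx : memC r n ((x : ℕ) + 1, 0) := ⟨x.isLt, hr, by simp⟩
  have hy : memC r n ((y : ℕ) + 1, 0) := ⟨y.isLt, hr, by simp⟩
  constructor
  · intro h
    by_contra hcon
    push_neg at hcon
    rcases Nat.lt_or_ge (x : ℕ) (y : ℕ) with h1 | h1
    · exact asymm_lt O hx hy (O.nat_mono _ _ x.isLt y.isLt (by omega)) h
    · have hxy : (x : ℕ) = (y : ℕ) := by omega
      rw [hxy] at h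
      exact O.irrefl _ hy h
  · intro h
    exact O.nat_mono _ _ y.isLt x.isLt (by omega)

abbrev Colored (c : Fin n → ℕ) := {p : Fin n // 0 < c p}

def crel (O : PDOrder r n) (c : Fin n → ℕ) (a b : Colored c) : Prop :=
  O.lt (sym c a.1) (sym c b.1)

lemma sym_inj (c : Fin n → ℕ) {p q : Fin n} (h : sym c p = sym c q) : p = q := by
  have h1 := congrArg Prod.fst h
  simp only [sym] at h1
  exact Fin.ext (by omega)

lemma sto (O : PDOrder r n) (c : Fin n → ℕ) (hc : ∀ i, c i < r) :
    IsStrictTotalOrder (Colored c) (crel O c) := by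
  haveI h1 : IsTrans (Colored c) (crel O c) :=
    ⟨fun a b d hab hbd =>
      O.trans _ _ _ (mem_sym hc a.1) (mem_sym hc b.1) (mem_sym hc d.1) hab hbd⟩
  haveI h2 : IsIrrefl (Colored c) (crel O c) := ⟨fun a => O.irrefl _ (mem_sym hc a.1)⟩
  haveI h3 : IsTrichotomous (Colored c) (crel O c) := by
    constructor
    intro a b
    rcases O.trichotomy (sym c a.1) (sym c b.1) (mem_sym hc a.1) (mem_sym hc b.1) with h | h | h
    · intro _ _
      exact Subtype.ext (sym_inj c h)
    · intro hab _
      exact absurd h hab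
    · intro _ hba
      exact absurd h hba
  haveI h4 : IsStrictOrder (Colored c) (crel O c) := ⟨⟩
  constructor

noncomputable def enum (O : PDOrder r n) (c : Fin n → ℕ) (hc : ∀ i, c i < r) :
    Fin (Fintype.card (Colored c)) ≃ Colored c :=
  haveI := sto O c hc
  (@monoEquivOfFin (Colored c) _ (linearOrderOfSTO (crel O c)) _ rfl).toEquiv

lemma enum_lt (O : PDOrder r n) (c : Fin n → ℕ) (hc : ∀ i, c i < r)
    (i j : Fin (Fintype.card (Colored c))) :
    crel O c (enum O c hc i) (enum O c hc j) ↔ i < j := by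
  haveI := sto O c hc
  set e := @monoEquivOfFin (Colored c) _ (linearOrderOfSTO (crel O c)) _ rfl with he
  show crel O c (e i) (e j) ↔ i < j
  constructor
  · intro h
    by_contra hij
    have hji : j ≤ i := le_of_not_gt hij
    have h2 : e j = e i ∨ crel O c (e j) (e i) := e.map_rel_iff.mpr hji
    rcases h2 with h2 | h2
    · rw [h2] at h
      exact O.irrefl _ (mem_sym hc _) h
    · exact asymm_lt O (mem_sym hc _) (mem_sym hc _) h h2
  · intro hij
    have h2 : e i = e j ∨ crel O c (e i) (e j) := e.map_rel_iff.mpr (le_of_lt hij)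
    rcases h2 with h2 | h2
    · exact absurd (e.toEquiv.injective h2) (ne_of_lt hij)
    · exact h2

noncomputable def tau (O P : PDOrder r n) (c : Fin n → ℕ) (hc : ∀ i, c i < r) :
    Colored c ≃ Colored c :=
  (enum O c hc).symm.trans (enum P c hc)

lemma tau_lt (O P : PDOrder r n) (c : Fin n → ℕ) (hc : ∀ i, c i < r) (a b : Colored c) :
    crel P c (tau O P c hc a) (tau O P c hc b) ↔ crel O c a b := by
  unfold tau
  simp only [Equiv.trans_apply]
  rw [enum_lt, ← enum_lt O c hc, Equiv.apply_symm_apply, Equiv.apply_symm_apply]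

lemma tau_tau (O P : PDOrder r n) (c : Fin n → ℕ) (hc : ∀ i, c i < r) (a : Colored c) :
    tau P O c hc (tau O P c hc a) = a := by
  simp [tau]

noncomputable def tperm (O P : PDOrder r n) (c : Fin n → ℕ) (hc : ∀ i, c i < r) :
    Equiv.Perm (Fin n) :=
  Equiv.Perm.subtypeCongr (tau O P c hc) (Equiv.refl _)

lemma tperm_pos (O P : PDOrder r n) (c : Fin n → ℕ) (hc : ∀ i, c i < r) {p : Fin n}
    (h : 0 < c p) : tperm O P c hc p = (tau O P c hc ⟨p, h⟩).1 := by
  unfold tperm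
  exact Equiv.Perm.subtypeCongr.left_apply (p := fun q => 0 < c q)
    (tau O P c hc) (Equiv.refl _) h

lemma tperm_neg (O P : PDOrder r n) (c : Fin n → ℕ) (hc : ∀ i, c i < r) {p : Fin n}
    (h : ¬ 0 < c p) : tperm O P c hc p = p := by
  unfold tperm
  have := Equiv.Perm.subtypeCongr.right_apply (p := fun q => 0 < c q)
    (tau O P c hc) (Equiv.refl _) h
  rw [this]
  rfl

lemma tperm_pos_iff (O P : PDOrder r n) (c : Fin n → ℕ) (hc : ∀ i, c i < r) (p : Fin n) :
    0 < c (tperm O P c hc p) ↔ 0 < c p := by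
  by_cases h : 0 < c p
  · rw [tperm_pos O P c hc h]
    simpa [h] using (tau O P c hc ⟨p, h⟩).2
  · rw [tperm_neg O P c hc h]

lemma tperm_tperm (O P : PDOrder r n) (c : Fin n → ℕ) (hc : ∀ i, c i < r) (p : Fin n) :
    tperm P O c hc (tperm O P c hc p) = p := by
  by_cases h : 0 < c p
  · rw [tperm_pos O P c hc h]
    have h2 : 0 < c ((tau O P c hc ⟨p, h⟩ : Colored c) : Fin n) := (tau O P c hc ⟨p, h⟩).2
    rw [tperm_pos P O c hc h2]
    have he : (⟨((tau O P c hc ⟨p, h⟩ : Colored c) : Fin n), h2⟩ : Colored c)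
        = tau O P c hc ⟨p, h⟩ := rfl
    rw [he, tau_tau]
  · rw [tperm_neg O P c hc h, tperm_neg P O c hc h]

/-- Helper: a colored symbol is `lt`-below an uncolored one. -/
lemma lt_pos_zero (O : PDOrder r n) {c : Fin n → ℕ} (hc : ∀ i, c i < r) {x y : Fin n}
    (hy : 0 < c y) (hx0 : c x = 0) : O.lt (sym c y) (sym c x) := by
  have h := O.pos_dom ((x : ℕ) + 1) ((y : ℕ) + 1) (c y) x.isLt (by omega) y.isLt hy (hc y)
  simpa [sym, hx0] using h

lemma lt_tperm_iff (O P : PDOrder r n) (c : Fin n → ℕ) (hc : ∀ i, c i < r) (x y : Fin n) :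
    O.lt (sym c y) (sym c x) ↔ P.lt (sym c (tperm O P c hc y)) (sym c (tperm O P c hc x)) := by
  have hr : 0 < r := Nat.lt_of_le_of_lt (Nat.zero_le _) (hc x)
  by_cases hx : 0 < c x <;> by_cases hy : 0 < c y
  · rw [tperm_pos O P c hc hx, tperm_pos O P c hc hy]
    exact (tau_lt O P c hc ⟨y, hy⟩ ⟨x, hx⟩).symm
  · -- c x > 0, c y = 0 : both sides false
    have hy0 : c y = 0 := by omega
    rw [tperm_pos O P c hc hx, tperm_neg O P c hc (by omega)]
    have htx : 0 < c ((tau O P c hc ⟨x, hx⟩ : Colored c) : Fin n) := (tau O P c hc ⟨x, hx⟩).2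
    exact iff_of_false
      (asymm_lt O (mem_sym hc x) (mem_sym hc y) (lt_pos_zero O hc hx hy0))
      (asymm_lt P (mem_sym hc _) (mem_sym hc y) (lt_pos_zero P hc htx hy0))
  · -- c x = 0, c y > 0 : both sides true
    have hx0 : c x = 0 := by omega
    rw [tperm_pos O P c hc hy, tperm_neg O P c hc (by omega)]
    have hty : 0 < c ((tau O P c hc ⟨y, hy⟩ : Colored c) : Fin n) := (tau O P c hc ⟨y, hy⟩).2
    exact iff_of_true (lt_pos_zero O hc hy hx0) (lt_pos_zero P hc hty hx0)
  · -- both uncolored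
    have hx0 : c x = 0 := by omega
    have hy0 : c y = 0 := by omega
    rw [tperm_neg O P c hc (by omega), tperm_neg O P c hc (by omega)]
    simp only [sym, hx0, hy0]
    rw [lt_nat_iff O hr, lt_nat_iff P hr]

/-- The bijection `Ψ` determined by the pair of orders. -/
noncomputable def Psi (O P : PDOrder r n) (f : ColoredSeq r n) : ColoredSeq r n where
  val := fun p => f.val (tperm O P f.col f.col_lt p)
  col := f.col
  col_lt := f.col_lt
  zero_col := fun p h => by
    by_contra hc0
    have hp : 0 < f.col p := Nat.pos_of_ne_zero hc0
    have h1 : 0 < f.col (tperm O P f.col f.col_lt p) :=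
      (tperm_pos_iff O P f.col f.col_lt p).mpr hp
    have h2 := f.zero_col _ h
    omega

lemma seq_ext {f g : ColoredSeq r n} (h1 : f.val = g.val) (h2 : f.col = g.col) : f = g := by
  cases f; cases g; simp only at h1 h2; subst h1; subst h2; rfl

lemma Psi_Psi (O P : PDOrder r n) (f : ColoredSeq r n) : Psi P O (Psi O P f) = f := by
  apply seq_ext
  · funext p
    show f.val (tperm O P f.col f.col_lt (tperm P O f.col f.col_lt p)) = f.val p
    rw [tperm_tperm]
  · rfl

noncomputable def cnt (O : PDOrder r n) (f : ColoredSeq r n) : ℕ :=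
  ((Finset.univ : Finset (Fin n × Fin n)).filter fun pq =>
    f.val pq.1 < f.val pq.2 ∧ O.lt (sym f.col pq.2) (sym f.col pq.1)).card

noncomputable def tsum (f : ColoredSeq r n) : ℕ :=
  ∑ p ∈ Finset.univ.filter (fun p => 0 < f.col p), ((p : ℕ) + 1 + f.col p - 1)

lemma cval_eq {lt : CI → CI → Prop} (f : ColoredSeq r n) (γ : ColoredPerm r n)
    (hs : isSorted lt f γ) (i : Fin n) : cval γ i = sym f.col (γ.perm i) := by
  unfold cval sym
  rw [hs.1 i]

lemma mem_cval (γ : ColoredPerm r n) (i : Fin n) : memC r n (cval γ i) :=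
  ⟨(γ.perm i).isLt, (γ.color i).isLt, by simp [cval]⟩

lemma inv_eq (O : PDOrder r n) (f : ColoredSeq r n) (γ : ColoredPerm r n)
    (hs : isSorted O.lt f γ) : invStat O.lt γ = cnt O f := by
  unfold invStat cnt
  apply Finset.card_nbij' (i := fun a => (γ.perm a.1, γ.perm a.2))
    (j := fun b => (γ.perm.symm b.1, γ.perm.symm b.2))
  · intro a ha
    simp only [Finset.mem_coe, Finset.mem_filter, Finset.mem_univ, true_and] at ha ⊢
    obtain ⟨hlt, hinv⟩ := ha
    rw [cval_eq f γ hs, cval_eq f γ hs] at hinv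
    refine ⟨?_, hinv⟩
    rcases hs.2 a.1 a.2 hlt with h | ⟨_, hl⟩
    · exact h
    · exfalso
      rw [← cval_eq f γ hs, ← cval_eq f γ hs] at hinv
      exact asymm_lt O (mem_cval γ a.1) (mem_cval γ a.2) hl hinv
  · intro b hb
    simp only [Finset.mem_coe, Finset.mem_filter, Finset.mem_univ, true_and] at hb ⊢
    obtain ⟨hv, hl⟩ := hb
    constructor
    · rcases lt_trichotomy (γ.perm.symm b.1) (γ.perm.symm b.2) with h | h | h
      · exact h
      · exfalso
        have : b.1 = b.2 := by
          have := congrArg γ.perm h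
          simpa using this
        rw [this] at hv
        omega
      · exfalso
        rcases hs.2 _ _ h with h2 | ⟨h2, _⟩ <;>
          · rw [Equiv.apply_symm_apply, Equiv.apply_symm_apply] at h2
            omega
    · rw [cval_eq f γ hs, cval_eq f γ hs, Equiv.apply_symm_apply, Equiv.apply_symm_apply]
      exact hl
  · intro a _
    simp
  · intro b _
    simp

lemma sum_eq {lt : CI → CI → Prop} (f : ColoredSeq r n) (γ : ColoredPerm r n)
    (hs : isSorted lt f γ) :
    ∑ i ∈ Finset.univ.filter (fun i => 0 < (γ.color i : ℕ)),
      ((γ.perm i : ℕ) + 1 + (γ.color i : ℕ) - 1) = tsum f := by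
  unfold tsum
  rw [Finset.sum_filter, Finset.sum_filter,
    ← Equiv.sum_comp γ.perm (fun p => if 0 < f.col p then (p : ℕ) + 1 + f.col p - 1 else 0)]
  apply Finset.sum_congr rfl
  intro i _
  rw [hs.1 i]

lemma len_eq (O : PDOrder r n) (f : ColoredSeq r n) (γ : ColoredPerm r n)
    (hs : isSorted O.lt f γ) : lenStat O.lt γ = cnt O f + tsum f := by
  unfold lenStat
  rw [inv_eq O f γ hs, sum_eq f γ hs]

lemma cnt_Psi (O P : PDOrder r n) (f : ColoredSeq r n) : cnt O (Psi O P f) = cnt P f := by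
  unfold cnt
  apply Finset.card_equiv
    (Equiv.prodCongr (tperm O P f.col f.col_lt) (tperm O P f.col f.col_lt))
  intro pq
  simp only [Finset.mem_filter, Finset.mem_univ, true_and, Equiv.prodCongr_apply,
    Prod.map_fst, Prod.map_snd]
  exact and_congr Iff.rfl (lt_tperm_iff O P f.col f.col_lt pq.1 pq.2)

lemma count_Psi (O P : PDOrder r n) (f : ColoredSeq r n) (j : ℕ) :
    (Finset.univ.filter fun i => (Psi O P f).val i = j).card
      = (Finset.univ.filter fun i => f.val i = j).card := by
  apply Finset.card_equiv (tperm O P f.col f.col_lt)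
  intro i
  simp only [Finset.mem_filter, Finset.mem_univ, true_and]
  exact Iff.rfl

lemma Psi_mem (O P : PDOrder r n) {k : ℕ} {nv : ℕ → ℕ} {f : ColoredSeq r n}
    (hf : f ∈ NSet r n k nv) : Psi O P f ∈ NSet r n k nv := by
  intro j hj
  rw [count_Psi]
  exact hf j hj

end Stmt5Aux


-- Statement 5
theorem stmt5 (r n k : ℕ) (hr : 0 < r) (hn : 0 < n) (O P : PDOrder r n)
    (nv : ℕ → ℕ) (hcomp : ∑ j ∈ Finset.range (k + 1), nv j = n)
    (gamO gamP : ColoredSeq r n → ColoredPerm r n)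
    (hO : ∀ f, isSorted O.lt f (gamO f)) (hP : ∀ f, isSorted P.lt f (gamP f)) :
    ∃ Ψ : ColoredSeq r n → ColoredSeq r n,
      Set.BijOn Ψ (NSet r n k nv) (NSet r n k nv) ∧
      ∀ f ∈ NSet r n k nv,
        lenStat P.lt (gamP f) = lenStat O.lt (gamO (Ψ f)) ∧ colf f = colf (Ψ f) := by
  classical
  refine ⟨Stmt5Aux.Psi O P, ?_, ?_⟩
  · refine Set.InvOn.bijOn (f' := Stmt5Aux.Psi P O) ⟨?_, ?_⟩ ?_ ?_
    · intro f _
      exact Stmt5Aux.Psi_Psi O P f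
    · intro f _
      exact Stmt5Aux.Psi_Psi P O f
    · intro f hf
      exact Stmt5Aux.Psi_mem O P hf
    · intro f hf
      exact Stmt5Aux.Psi_mem P O hf
  · intro f _
    constructor
    · rw [Stmt5Aux.len_eq P f (gamP f) (hP f),
        Stmt5Aux.len_eq O (Stmt5Aux.Psi O P f) (gamO (Stmt5Aux.Psi O P f)) (hO _),
        Stmt5Aux.cnt_Psi O P f]
      congr 1
    · rfl
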